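/- Gradient ascent distance recursion: suppose a sequence p_t in ℝ evolves as p_{t+1} = p_t + η_t g(p_t, x_t), where |g| ≤ G, and suppose there exist ε > 0, K > 0 and a target p* such that whenever (p* - p_t)^2 ≥ ε, one has g(p_t, x_t)(p* - p_t) ≥ Kε/2. If η_t > 0, Σ η_t = ∞, Σ η_t² < ∞, then for every ε > 0 there exists T such that (p* - p_t)^2 < 2ε for all t ≥ T; hence p_t → p*. -/

import Mathlib

open Filter Topology

/-- Gradient-ascent distance recursion: a sequence `p` updated by
`p (t+1) = p t + η t * γ t` with bounded "gradients" `γ`, positive non-summable but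
square-summable stepsizes, and a drift condition towards `pstar`, satisfies
`(pstar - p t)² < 2ε` eventually for every `ε > 0`; hence `p t → pstar`. -/
theorem stmt15 (p γ η : ℕ → ℝ) (G K pstar : ℝ)
    (hG : ∀ t, |γ t| ≤ G) (hK : 0 < K)
    (hupd : ∀ t, p (t + 1) = p t + η t * γ t)
    (hη_pos : ∀ t, 0 < η t)
    (hη_div : Tendsto (fun T => ∑ t ∈ Finset.range T, η t) atTop atTop)
    (hη_sq : Summable fun t => (η t) ^ 2)
    (hdrift : ∀ ε > (0 : ℝ), ∃ T₀ : ℕ, ∀ t ≥ T₀,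
      ε ≤ (pstar - p t) ^ 2 → K * ε / 2 ≤ γ t * (pstar - p t)) :
    (∀ ε > (0 : ℝ), ∃ T : ℕ, ∀ t ≥ T, (pstar - p t) ^ 2 < 2 * ε) ∧
    Tendsto p atTop (𝓝 pstar) := by
  have hG0 : 0 ≤ G := le_trans (abs_nonneg _) (hG 0)
  -- η → 0
  have hη0 : Tendsto η atTop (𝓝 0) := by
    have h2 : Tendsto (fun t => (η t) ^ 2) atTop (𝓝 0) := hη_sq.tendsto_atTop_zero
    have h3 := (Real.continuous_sqrt.tendsto 0).comp h2
    simp only [Real.sqrt_zero, Function.comp] at h3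
    refine h3.congr fun t => ?_
    exact Real.sqrt_sq (hη_pos t).le
  have key : ∀ ε > (0 : ℝ), ∃ T : ℕ, ∀ t ≥ T, (pstar - p t) ^ 2 < 2 * ε := by
    intro ε hε
    obtain ⟨T₀, hT₀⟩ := hdrift ε hε
    have hsqε : 0 < Real.sqrt ε := Real.sqrt_pos.mpr hε
    set δ := min (K * ε / (2 * (G ^ 2 + 1))) (Real.sqrt ε / (3 * (G + 1))) with hδdef
    have hδpos : 0 < δ := by
      apply lt_min
      · positivity
      · positivity
    obtain ⟨T₁', hT₁'⟩ := Metric.tendsto_atTop.mp hη0 δ hδpos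
    set T₁ := max T₀ T₁' with hT₁def
    have hηδ : ∀ t ≥ T₁, η t < δ := by
      intro t ht
      have := hT₁' t (le_trans (le_max_right _ _) ht)
      rwa [Real.dist_eq, sub_zero, abs_of_pos (hη_pos t)] at this
    have hrec : ∀ t, (pstar - p (t + 1)) ^ 2
        = (pstar - p t) ^ 2 - 2 * η t * (γ t * (pstar - p t)) + (η t) ^ 2 * (γ t) ^ 2 := by
      intro t; rw [hupd t]; ring
    have hγsq : ∀ t, (γ t) ^ 2 ≤ G ^ 2 := fun t => by
      have h := hG t
      nlinarith [abs_nonneg (γ t), sq_abs (γ t)]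
    -- decrease when big
    have hbig : ∀ t ≥ T₁, ε ≤ (pstar - p t) ^ 2 →
        (pstar - p (t + 1)) ^ 2 ≤ (pstar - p t) ^ 2 - η t * (K * ε / 2) := by
      intro t ht hd
      have hdrift' := hT₀ t (le_trans (le_max_left _ _) ht) hd
      have hηt := hηδ t ht
      have hg1 : (0 : ℝ) < G ^ 2 + 1 := by positivity
      have hη1 : η t * (G ^ 2 + 1) ≤ K * ε / 2 := by
        have h1 : η t ≤ K * ε / (2 * (G ^ 2 + 1)) := hηt.le.trans (min_le_left _ _)
        calc η t * (G ^ 2 + 1) ≤ (K * ε / (2 * (G ^ 2 + 1))) * (G ^ 2 + 1) :=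
              mul_le_mul_of_nonneg_right h1 hg1.le
          _ = K * ε / 2 := by field_simp
      have h2 : (η t) ^ 2 * (γ t) ^ 2 ≤ η t * (K * ε / 2) := by
        have hγ := hγsq t
        have hηp := (hη_pos t).le
        nlinarith [sq_nonneg (η t), sq_nonneg (γ t)]
      rw [hrec t]
      nlinarith [hη_pos t]
    -- stay small
    have hsmall : ∀ t ≥ T₁, (pstar - p t) ^ 2 < ε → (pstar - p (t + 1)) ^ 2 < 2 * ε := by
      intro t ht hd
      have hs : |pstar - p t| < Real.sqrt ε := by
        rw [← Real.sqrt_sq_eq_abs]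
        exact Real.sqrt_lt_sqrt (sq_nonneg _) hd
      have hηG : η t * G < Real.sqrt ε / 3 := by
        have h1 : η t < Real.sqrt ε / (3 * (G + 1)) :=
          lt_of_lt_of_le (hηδ t ht) (min_le_right _ _)
        have hg : (0 : ℝ) < G + 1 := by linarith
        have h2 : η t * (G + 1) < (Real.sqrt ε / (3 * (G + 1))) * (G + 1) :=
          mul_lt_mul_of_pos_right h1 hg
        have h3 : (Real.sqrt ε / (3 * (G + 1))) * (G + 1) = Real.sqrt ε / 3 := by
          field_simp
        nlinarith [hη_pos t]
      have htri : |pstar - p (t + 1)| ≤ |pstar - p t| + η t * G := by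
        rw [hupd t]
        have h1 : pstar - (p t + η t * γ t) = (pstar - p t) + (-(η t * γ t)) := by ring
        rw [h1]
        refine le_trans (abs_add_le _ _) ?_
        have h2 : |-(η t * γ t)| = η t * |γ t| := by
          rw [abs_neg, abs_mul, abs_of_pos (hη_pos t)]
        rw [h2]
        have := mul_le_mul_of_nonneg_left (hG t) (hη_pos t).le
        linarith
      have hfin : |pstar - p (t + 1)| < Real.sqrt ε + Real.sqrt ε / 3 :=
        lt_of_le_of_lt htri (add_lt_add_of_lt_of_lt hs hηG)
      nlinarith [abs_nonneg (pstar - p (t + 1)), sq_abs (pstar - p (t + 1)),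
        Real.sq_sqrt hε.le, Real.sqrt_nonneg ε]
    -- exists a time with small distance
    have hex : ∃ t0, T₁ ≤ t0 ∧ (pstar - p t0) ^ 2 < ε := by
      by_contra hcon
      push_neg at hcon
      have hdecn : ∀ n, (pstar - p (T₁ + n)) ^ 2
          ≤ (pstar - p T₁) ^ 2 - (K * ε / 2) * ∑ i ∈ Finset.range n, η (T₁ + i) := by
        intro n
        induction n with
        | zero => simp
        | succ n ih =>
          have ht : T₁ ≤ T₁ + n := Nat.le_add_right _ _
          have hb := hbig (T₁ + n) ht (hcon _ ht)
          rw [Finset.sum_range_succ]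
          have hidx : T₁ + (n + 1) = (T₁ + n) + 1 := by omega
          rw [hidx]
          linarith
      have hshift : Tendsto (fun n => ∑ i ∈ Finset.range n, η (T₁ + i)) atTop atTop := by
        have heq : ∀ n, ∑ i ∈ Finset.range n, η (T₁ + i)
            = (∑ t ∈ Finset.range (T₁ + n), η t) - ∑ t ∈ Finset.range T₁, η t := by
          intro n
          rw [Finset.sum_range_add]
          ring
        have h1 : Tendsto (fun n => ∑ t ∈ Finset.range (T₁ + n), η t) atTop atTop := by
          have := hη_div.comp (tendsto_add_atTop_nat T₁)
          simpa [Nat.add_comm, Function.comp_def] using this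
        have h2 := h1.atTop_add tendsto_const_nhds (C := -(∑ t ∈ Finset.range T₁, η t))
        refine h2.congr fun n => ?_
        rw [heq n]; ring
      have hKε : (0 : ℝ) < K * ε / 2 := by positivity
      obtain ⟨N, hN⟩ := (hshift.eventually_gt_atTop ((pstar - p T₁) ^ 2 / (K * ε / 2))).exists
      have hsum : (pstar - p T₁) ^ 2 < (K * ε / 2) * ∑ i ∈ Finset.range N, η (T₁ + i) := by
        have := (div_lt_iff₀ hKε).mp hN
        linarith
      have := hdecn N
      nlinarith [sq_nonneg (pstar - p (T₁ + N))]
    obtain ⟨t0, ht0, hdt0⟩ := hex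
    refine ⟨t0, ?_⟩
    intro t ht
    induction t, ht using Nat.le_induction with
    | base => linarith
    | succ t ht ih =>
      have ht1 : T₁ ≤ t := le_trans ht0 ht
      by_cases hc : (pstar - p t) ^ 2 < ε
      · exact hsmall t ht1 hc
      · push_neg at hc
        have hb := hbig t ht1 hc
        have : 0 < η t * (K * ε / 2) := mul_pos (hη_pos t) (by positivity)
        linarith
  refine ⟨key, ?_⟩
  rw [Metric.tendsto_atTop]
  intro ε hε
  obtain ⟨T, hT⟩ := key (ε ^ 2 / 2) (by positivity)
  refine ⟨T, fun t ht => ?_⟩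
  have h1 := hT t ht
  rw [Real.dist_eq]
  by_contra hcon
  push_neg at hcon
  have h2 : |p t - pstar| ^ 2 = (pstar - p t) ^ 2 := by
    rw [sq_abs]; ring
  nlinarith [abs_nonneg (p t - pstar)]
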